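/- (Shelah's club guessing) Let κ, θ be regular cardinals with κ > max(θ⁺, ℵ₂). Then for every stationary S ⊆ S^θ_κ, the principle ◊'_club(S) holds: there exists a sequence ⟨S_α : α ∈ S⟩ with S_α ⊆ α cofinal in α, |S_α| ≤ θ, such that for every club C ⊆ κ the set {α ∈ S : ∃β < α, S_α \ β ⊆ C} is stationary in κ. -/

import Mathlib

open Ordinal Set Cardinal

/-- `C` is a club (closed unbounded) subset of the ordinal `κ`. -/
def IsClubIn (C : Set Ordinal) (κ : Ordinal) : Prop :=
  C ⊆ Set.Iio κ ∧ (∀ β < κ, ∃ γ ∈ C, β < γ) ∧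
    (∀ α < κ, α ≠ 0 → (∀ β < α, ∃ γ ∈ C, β < γ ∧ γ < α) → α ∈ C)

/-- `S` is stationary in `κ`: it meets every club of `κ`. -/
def IsStationaryIn (S : Set Ordinal) (κ : Ordinal) : Prop :=
  ∀ C, IsClubIn C κ → (S ∩ C).Nonempty

/-- `S^θ_κ`, the set of ordinals below `κ` of cofinality `θ`. -/
def cofSet (κ θ : Cardinal) : Set Ordinal :=
  {α | α < κ.ord ∧ α.cof = θ}

section Aux

variable {k : Ordinal.{0}}

/-- Core ω-iteration lemma. -/
lemma omega_iter (h0 : ℵ₀ < k.cof) (g : Ordinal → Ordinal)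
    (hg : ∀ b < k, b < g b ∧ g b < k) {β : Ordinal} (hβ : β < k) :
    ∃ (s : ℕ → Ordinal) (γ : Ordinal), γ < k ∧ β < γ ∧ (∀ n, s n < k) ∧
      (∀ n, s (n + 1) = g (s n)) ∧ (∀ n, s n < γ) ∧ s 0 = β ∧ ∀ δ < γ, ∃ n, δ < s n := by
  set s : ℕ → Ordinal := fun n => g^[n] β with hs
  have hsucc : ∀ n, s (n + 1) = g (s n) := by
    intro n; simp only [hs, Function.iterate_succ_apply']
  have hlt : ∀ n, s n < k := by
    intro n
    induction n with
    | zero => simpa [hs]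
    | succ n ih => rw [hsucc]; exact (hg _ ih).2
  have hmono : ∀ n, s n < s (n + 1) := fun n => by rw [hsucc]; exact (hg _ (hlt n)).1
  have hγk : (⨆ n, s n) < k := by
    apply Ordinal.iSup_lt_ord _ hlt
    rwa [Cardinal.mk_nat]
  have hsγ : ∀ n, s n < ⨆ n, s n :=
    fun n => lt_of_lt_of_le (hmono n) (Ordinal.le_iSup s (n + 1))
  refine ⟨s, ⨆ n, s n, hγk, ?_, hlt, hsucc, hsγ, by simp [hs], ?_⟩
  · simpa [hs] using hsγ 0
  · intro δ hδ
    exact Ordinal.lt_iSup_iff.mp hδ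

/-- Intersection of two clubs is a club. -/
lemma club_inter (h0 : ℵ₀ < k.cof) {C D : Set Ordinal} (hC : IsClubIn C k)
    (hD : IsClubIn D k) : IsClubIn (C ∩ D) k := by
  have hu : ∀ b : Ordinal, ∃ c, b < k → c ∈ C ∧ b < c ∧ c < k := by
    intro b
    by_cases hb : b < k
    · obtain ⟨c, hc, hbc⟩ := hC.2.1 b hb
      exact ⟨c, fun _ => ⟨hc, hbc, hC.1 hc⟩⟩
    · exact ⟨0, fun h => absurd h hb⟩
  have hv : ∀ b : Ordinal, ∃ c, b < k → c ∈ D ∧ b < c ∧ c < k := by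
    intro b
    by_cases hb : b < k
    · obtain ⟨c, hc, hbc⟩ := hD.2.1 b hb
      exact ⟨c, fun _ => ⟨hc, hbc, hD.1 hc⟩⟩
    · exact ⟨0, fun h => absurd h hb⟩
  choose u hu using hu
  choose v hv using hv
  refine ⟨fun x hx => hC.1 hx.1, ?_, ?_⟩
  · intro β hβ
    obtain ⟨s, γ, hγk, hβγ, hsk, hss, hsγ, hs0, hcf⟩ :=
      omega_iter h0 (fun b => u (v b))
        (fun b hb => ⟨lt_trans (hv b hb).2.1 (hu (v b) (hv b hb).2.2).2.1,
          (hu (v b) (hv b hb).2.2).2.2⟩) hβ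
    have hγne : γ ≠ 0 := fun h => by
      rw [h] at hβγ; exact absurd hβγ (not_lt_of_ge (zero_le (a := β)))
    refine ⟨γ, ⟨?_, ?_⟩, hβγ⟩
    · refine hC.2.2 γ hγk hγne ?_
      intro δ hδ
      obtain ⟨n, hn⟩ := hcf δ hδ
      refine ⟨u (v (s n)), (hu (v (s n)) (hv (s n) (hsk n)).2.2).1, ?_, ?_⟩
      · exact lt_trans hn (lt_trans (hv (s n) (hsk n)).2.1
          (hu (v (s n)) (hv (s n) (hsk n)).2.2).2.1)
      · rw [← hss n]; exact hsγ (n + 1)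
    · refine hD.2.2 γ hγk hγne ?_
      intro δ hδ
      obtain ⟨n, hn⟩ := hcf δ hδ
      refine ⟨v (s n), (hv (s n) (hsk n)).1, lt_trans hn (hv (s n) (hsk n)).2.1, ?_⟩
      calc v (s n) < u (v (s n)) := (hu (v (s n)) (hv (s n) (hsk n)).2.2).2.1
        _ = s (n + 1) := (hss n).symm
        _ < γ := hsγ (n + 1)
  · intro α hα hα0 hcl
    exact ⟨hC.2.2 α hα hα0 (fun β hβ => (hcl β hβ).imp fun γ hγ => ⟨hγ.1.1, hγ.2⟩),
      hD.2.2 α hα hα0 (fun β hβ => (hcl β hβ).imp fun γ hγ => ⟨hγ.1.2, hγ.2⟩)⟩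

/-- Intersection of a decreasing short family of clubs is a club. -/
lemma club_iInter (h0 : ℵ₀ < k.cof) {l : Ordinal} (hl : l ≠ 0) (hcard : l.card < k.cof)
    (F : Ordinal → Set Ordinal) (hF : ∀ j < l, IsClubIn (F j) k)
    (hdec : ∀ i j, i ≤ j → j < l → F j ⊆ F i) :
    IsClubIn (⋂ j, ⋂ _ : j < l, F j) k := by
  have hl0 : (0 : Ordinal) < l := pos_iff_ne_zero.2 hl
  have hy : ∀ j b : Ordinal, ∃ c, j < l → b < k → c ∈ F j ∧ b < c ∧ c < k := by
    intro j b
    by_cases hj : j < l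
    · by_cases hb : b < k
      · obtain ⟨c, hc, hbc⟩ := (hF j hj).2.1 b hb
        exact ⟨c, fun _ _ => ⟨hc, hbc, (hF j hj).1 hc⟩⟩
      · exact ⟨0, fun _ h => absurd h hb⟩
    · exact ⟨0, fun h => absurd h hj⟩
  choose y hy using hy
  set g : Ordinal → Ordinal := fun b => Ordinal.bsup l (fun j _ => y j b) with hgdef
  have hg : ∀ b < k, b < g b ∧ g b < k := by
    intro b hb
    constructor
    · exact lt_of_lt_of_le (hy 0 b hl0 hb).2.1 (Ordinal.le_bsup _ 0 hl0)
    · exact Ordinal.bsup_lt_ord hcard fun j hj => (hy j b hj hb).2.2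
  refine ⟨?_, ?_, ?_⟩
  · intro x hx
    exact (hF 0 hl0).1 (Set.mem_iInter₂.mp hx 0 hl0)
  · intro β hβ
    obtain ⟨s, γ, hγk, hβγ, hsk, hss, hsγ, hs0, hcf⟩ := omega_iter h0 g hg hβ
    have hγne : γ ≠ 0 := fun h => by
      rw [h] at hβγ; exact absurd hβγ (not_lt_of_ge (zero_le (a := β)))
    refine ⟨γ, Set.mem_iInter₂.mpr fun j hj => ?_, hβγ⟩
    refine (hF j hj).2.2 γ hγk hγne ?_
    intro δ hδ
    obtain ⟨n, hn⟩ := hcf δ hδ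
    refine ⟨y j (s n), (hy j (s n) hj (hsk n)).1,
      lt_trans hn (hy j (s n) hj (hsk n)).2.1, ?_⟩
    calc y j (s n) ≤ g (s n) := Ordinal.le_bsup _ j hj
      _ = s (n + 1) := (hss n).symm
      _ < γ := hsγ (n + 1)
  · intro α hα hα0 hcl
    refine Set.mem_iInter₂.mpr fun j hj => (hF j hj).2.2 α hα hα0 ?_
    intro β hβ
    obtain ⟨γ, hγ, h1, h2⟩ := hcl β hβ
    exact ⟨γ, Set.mem_iInter₂.mp hγ j hj, h1, h2⟩

/-- accumulation points below `k` of a set. -/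
def accIn (E : Set Ordinal) (k : Ordinal) : Set Ordinal :=
  {α | α < k ∧ α ≠ 0 ∧ ∀ β < α, ∃ γ ∈ E, β < γ ∧ γ < α}

lemma accIn_subset {E : Set Ordinal} (hE : IsClubIn E k) : accIn E k ⊆ E :=
  fun α hα => hE.2.2 α hα.1 hα.2.1 hα.2.2

lemma accIn_mono {E F : Set Ordinal} (h : E ⊆ F) : accIn E k ⊆ accIn F k := by
  intro α hα
  exact ⟨hα.1, hα.2.1, fun β hβ => (hα.2.2 β hβ).imp fun γ hγ => ⟨h hγ.1, hγ.2⟩⟩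

lemma club_accIn (h0 : ℵ₀ < k.cof) {E : Set Ordinal} (hE : IsClubIn E k) :
    IsClubIn (accIn E k) k := by
  have hu : ∀ b : Ordinal, ∃ c, b < k → c ∈ E ∧ b < c ∧ c < k := by
    intro b
    by_cases hb : b < k
    · obtain ⟨c, hc, hbc⟩ := hE.2.1 b hb
      exact ⟨c, fun _ => ⟨hc, hbc, hE.1 hc⟩⟩
    · exact ⟨0, fun h => absurd h hb⟩
  choose u hu using hu
  refine ⟨fun x hx => hx.1, ?_, ?_⟩
  · intro β hβ
    obtain ⟨s, γ, hγk, hβγ, hsk, hss, hsγ, hs0, hcf⟩ :=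
      omega_iter h0 u (fun b hb => ⟨(hu b hb).2.1, (hu b hb).2.2⟩) hβ
    have hγne : γ ≠ 0 := fun h => by
      rw [h] at hβγ; exact absurd hβγ (not_lt_of_ge (zero_le (a := β)))
    refine ⟨γ, ⟨hγk, hγne, ?_⟩, hβγ⟩
    intro δ hδ
    obtain ⟨n, hn⟩ := hcf δ hδ
    refine ⟨u (s n), (hu (s n) (hsk n)).1, lt_trans hn (hu (s n) (hsk n)).2.1, ?_⟩
    rw [← hss n]; exact hsγ (n + 1)
  · intro α hα hα0 hcl
    refine ⟨hα, hα0, ?_⟩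
    intro β hβ
    obtain ⟨p, hp, hβp, hpα⟩ := hcl β hβ
    obtain ⟨γ, hγE, hβγ, hγp⟩ := hp.2.2 β hβp
    exact ⟨γ, hγE, hβγ, lt_trans hγp hpα⟩

end Aux
/-- chosen fundamental sequence for `a`, as a total function. -/
noncomputable def fsF (a : Ordinal.{0}) : Ordinal.{0} → Ordinal.{0} := fun b =>
  if h : b < a.cof.ord then (Ordinal.exists_fundamental_sequence a).choose b h else 0

lemma fsF_spec (a : Ordinal.{0}) :
    IsFundamentalSequence a a.cof.ord (fun b _ => fsF a b) := by
  have h := (Ordinal.exists_fundamental_sequence a).choose_spec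
  have he : (fun (b : Ordinal) (hb : b < a.cof.ord) => fsF a b) =
      (Ordinal.exists_fundamental_sequence a).choose := by
    funext b hb
    simp [fsF, hb]
  rw [he]
  exact h

def bsetOf (a : Ordinal.{0}) : Set Ordinal.{0} := fsF a '' Set.Iio a.cof.ord

lemma bset_lt {a x : Ordinal.{0}} (hx : x ∈ bsetOf a) : x < a := by
  obtain ⟨b, hb, rfl⟩ := hx
  have := Ordinal.lt_blsub (fun b (_ : b < a.cof.ord) => fsF a b) b hb
  rwa [(fsF_spec a).2.2] at this

lemma bset_nonempty {a : Ordinal.{0}} (ha : Order.IsSuccLimit a) : (bsetOf a).Nonempty := by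
  have h : (0 : Ordinal) < a.cof.ord := by
    have h1 : ℵ₀ ≤ a.cof := Ordinal.aleph0_le_cof.2 ha
    calc (0:Ordinal) < ω := Ordinal.omega0_pos
      _ = Cardinal.ord ℵ₀ := Cardinal.ord_aleph0.symm
      _ ≤ a.cof.ord := Cardinal.ord_le_ord.2 h1
  exact ⟨fsF a 0, 0, h, rfl⟩

lemma bset_bdd {a : Ordinal.{0}} : BddAbove (bsetOf a) :=
  ⟨a, fun x hx => (bset_lt hx).le⟩

lemma bset_cofinal {a β : Ordinal.{0}} (hβ : β < a) : ∃ x ∈ bsetOf a, β ≤ x := by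
  have h : β < Ordinal.blsub a.cof.ord (fun b (_ : b < a.cof.ord) => fsF a b) := by
    rwa [(fsF_spec a).2.2]
  obtain ⟨i, hi, hle⟩ := Ordinal.lt_blsub_iff.mp h
  exact ⟨fsF a i, ⟨i, hi, rfl⟩, hle⟩

lemma bset_sSup {a : Ordinal.{0}} (ha : Order.IsSuccLimit a) : sSup (bsetOf a) = a := by
  refine le_antisymm (csSup_le (bset_nonempty ha) fun x hx => (bset_lt hx).le) ?_
  by_contra h
  have hlt : sSup (bsetOf a) < a := lt_of_not_ge h
  obtain ⟨x, hx, hle⟩ := bset_cofinal (ha.succ_lt hlt)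
  exact absurd (le_csSup bset_bdd hx) (not_le.2 (lt_of_lt_of_le (Order.lt_succ _) hle))

lemma bset_card {a : Ordinal.{0}} : #(bsetOf a) ≤ Cardinal.lift.{1} a.cof := by
  calc #(bsetOf a) ≤ #(Set.Iio a.cof.ord) := Cardinal.mk_image_le
    _ = Cardinal.lift.{1} a.cof.ord.card := Ordinal.mk_Iio_ordinal _
    _ = Cardinal.lift.{1} a.cof := by rw [Cardinal.card_ord]

/-- the projection of `bsetOf a` along a set `E`. -/
def projOf (E : Set Ordinal.{0}) (a : Ordinal.{0}) : Set Ordinal.{0} :=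
  (fun γ => sSup (E ∩ Set.Iio γ)) '' bsetOf a

/-- `a` is an accumulation point of `E`. -/
def PAcc (E : Set Ordinal.{0}) (a : Ordinal.{0}) : Prop :=
  ∀ β < a, ∃ x ∈ E, β < x ∧ x < a

open Classical in
/-- the candidate club-guessing sequence derived from club `E`. -/
noncomputable def ScOf (E : Set Ordinal.{0}) (a : Ordinal.{0}) : Set Ordinal.{0} :=
  if PAcc E a then projOf E a else bsetOf a

lemma sSup_le_of_subset_Iio {W : Set Ordinal.{0}} {g : Ordinal} (hW : W ⊆ Set.Iio g) :
    sSup W ≤ g := by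
  rcases W.eq_empty_or_nonempty with rfl | hne
  · simp [csSup_empty, Ordinal.bot_eq_zero, zero_le]
  · exact csSup_le hne fun w hw => (hW hw).le

lemma proj_subset {E : Set Ordinal.{0}} {a : Ordinal.{0}} (ha : Order.IsSuccLimit a) :
    projOf E a ⊆ Set.Iio a := by
  rintro x ⟨γ, hγ, rfl⟩
  exact lt_of_le_of_lt (sSup_le_of_subset_Iio (Set.inter_subset_right)) (bset_lt hγ)

lemma proj_sSup {E : Set Ordinal.{0}} {a : Ordinal.{0}} (ha : Order.IsSuccLimit a)
    (hP : PAcc E a) : sSup (projOf E a) = a := by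
  refine le_antisymm (csSup_le ((bset_nonempty ha).image _)
    fun x hx => (proj_subset ha hx).le) ?_
  by_contra h
  have hlt : sSup (projOf E a) < a := lt_of_not_ge h
  obtain ⟨x, hxE, hmx, hxa⟩ := hP _ hlt
  obtain ⟨γ, hγ, hxγ⟩ := bset_cofinal (ha.succ_lt hxa)
  have hxγ' : x < γ := lt_of_lt_of_le (Order.lt_succ x) hxγ
  have hmem : sSup (E ∩ Set.Iio γ) ∈ projOf E a := ⟨γ, hγ, rfl⟩
  have hxle : x ≤ sSup (E ∩ Set.Iio γ) :=
    le_csSup ⟨γ, fun w hw => hw.2.le⟩ ⟨hxE, hxγ'⟩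
  have hfin : sSup (E ∩ Set.Iio γ) ≤ sSup (projOf E a) :=
    le_csSup ⟨a, fun w hw => (proj_subset ha hw).le⟩ hmem
  exact absurd (hxle.trans hfin) (not_le.2 hmx)

lemma Sc_good {E : Set Ordinal.{0}} {a : Ordinal.{0}} (ha : Order.IsSuccLimit a) :
    ScOf E a ⊆ Set.Iio a ∧ sSup (ScOf E a) = a ∧ #(ScOf E a) ≤ Cardinal.lift.{1} a.cof := by
  unfold ScOf
  split_ifs with hP
  · exact ⟨proj_subset ha, proj_sSup ha hP, Cardinal.mk_image_le.trans bset_card⟩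
  · exact ⟨fun x hx => bset_lt hx, bset_sSup ha, bset_card⟩

/-- Proposition 3, Shelah's club guessing: for regular `κ, θ` with
`κ > max(θ⁺, ℵ₂)`, every stationary `S ⊆ S^θ_κ` carries a `◊'_club(S)`-sequence. -/
theorem club_guessing (κ θ : Cardinal.{0}) (hκ : κ.IsRegular) (hθ : θ.IsRegular)
    (hbig : max (Order.succ θ) (Cardinal.aleph 2) < κ)
    (S : Set Ordinal.{0}) (hS : S ⊆ cofSet κ θ) (hSstat : IsStationaryIn S κ.ord) :
    ∃ Sseq : Ordinal.{0} → Set Ordinal.{0},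
      (∀ α ∈ S, Sseq α ⊆ Set.Iio α ∧ sSup (Sseq α) = α ∧
        #(Sseq α) ≤ Cardinal.lift.{1} θ) ∧
      (∀ C, IsClubIn C κ.ord →
        IsStationaryIn {α ∈ S | ∃ β < α, ∀ γ ∈ Sseq α, β ≤ γ → γ ∈ C} κ.ord) := by
  classical
  by_contra hcon
  push_neg at hcon
  set k := κ.ord with hkdef
  -- basic facts
  have hθκ : θ < κ := lt_of_lt_of_le (Order.lt_succ θ) ((le_max_left _ _).trans hbig.le)
  have hsθκ : Order.succ θ < κ := (le_max_left _ _).trans_lt hbig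
  have hℵ0θ : ℵ₀ ≤ θ := hθ.aleph0_le
  have hℵ0κ : ℵ₀ < κ := hℵ0θ.trans_lt hθκ
  have hcofk : k.cof = κ := hκ.cof_eq
  have h0 : ℵ₀ < k.cof := by rw [hcofk]; exact hℵ0κ
  have hklim : Order.IsSuccLimit k := Cardinal.isSuccLimit_ord hℵ0κ.le
  set ν := (Order.succ θ).ord with hνdef
  have hνreg : (Order.succ θ).IsRegular := Cardinal.isRegular_succ hℵ0θ
  have hνlim : Order.IsSuccLimit ν := Cardinal.isSuccLimit_ord (hℵ0θ.trans (Order.le_succ θ))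
  have hνcof : ν.cof = Order.succ θ := hνreg.cof_eq
  have hνcard : ν.card = Order.succ θ := Cardinal.card_ord _
  have hSlim : ∀ α ∈ S, Order.IsSuccLimit α := by
    intro α hα
    refine Ordinal.aleph0_le_cof.1 ?_
    rw [(hS hα).2]; exact hℵ0θ
  have hGood : ∀ (E : Set Ordinal) (α : Ordinal), α ∈ S →
      ScOf E α ⊆ Set.Iio α ∧ sSup (ScOf E α) = α ∧ #(ScOf E α) ≤ Cardinal.lift.{1} θ := by
    intro E α hα
    have := Sc_good (E := E) (hSlim α hα)
    rwa [(hS hα).2] at this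
  -- from the negated goal, extract a pair of clubs for every club E
  have key : ∀ E : Set Ordinal, IsClubIn E k → ∃ C D, IsClubIn C k ∧ IsClubIn D k ∧
      ∀ α ∈ S, α ∈ D → ¬∃ β < α, ∀ γ ∈ ScOf E α, β ≤ γ → γ ∈ C := by
    intro E hE
    obtain ⟨C, hC, hnst⟩ := hcon (ScOf E) (fun α hα => hGood E α hα)
    rw [IsStationaryIn] at hnst
    push_neg at hnst
    obtain ⟨D, hD, hTD⟩ := hnst
    refine ⟨C, D, hC, hD, ?_⟩
    intro α hαS hαD hex
    exact Set.eq_empty_iff_forall_notMem.mp hTD α ⟨⟨hαS, hex⟩, hαD⟩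
  choose CC DD hCC hDD hbad using key
  -- the derivation of clubs
  set Φ : Set Ordinal → Set Ordinal :=
    fun X => if h : IsClubIn X k then X ∩ CC X h ∩ DD X h else Set.univ with hΦ
  set E : Ordinal → Set Ordinal := fun i =>
    Ordinal.limitRecOn i (Set.Iio k) (fun _ ih => Φ ih)
      (fun o _ ih => ⋂ j, ⋂ hj : j < o, ih j hj) with hEdef
  have E0 : E 0 = Set.Iio k := Ordinal.limitRecOn_zero _ _ _
  have Esucc : ∀ i, E (Order.succ i) = Φ (E i) := fun i => Ordinal.limitRecOn_succ _ _ _ _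
  have Elim : ∀ o (ho : Order.IsSuccLimit o), E o = ⋂ j, ⋂ _ : j < o, E j :=
    fun o ho => Ordinal.limitRecOn_limit _ _ _ _ ho
  have Eprop : ∀ i, i ≤ ν → IsClubIn (E i) k ∧ ∀ j, j ≤ i → E i ⊆ E j := by
    intro i
    induction i using Ordinal.induction with
    | _ i IH =>
    intro hiν
    rcases Ordinal.zero_or_succ_or_isSuccLimit i with rfl | ⟨p, rfl⟩ | hlim
    · rw [E0]
      refine ⟨⟨fun x hx => hx, ?_, fun α hα _ _ => hα⟩, ?_⟩
      · intro β hβ; exact ⟨Order.succ β, hklim.succ_lt hβ, Order.lt_succ β⟩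
      · intro j hj
        rw [nonpos_iff_eq_zero.mp hj, E0]
    · have hp : p < Order.succ p := Order.lt_succ p
      obtain ⟨hclub, hmono⟩ := IH p hp (le_trans hp.le hiν)
      have hstep : E (Order.succ p) = E p ∩ CC (E p) hclub ∩ DD (E p) hclub := by
        rw [Esucc p]
        simp only [hΦ]
        rw [dif_pos hclub]
      constructor
      · rw [hstep]
        exact club_inter h0 (club_inter h0 hclub (hCC _ hclub)) (hDD _ hclub)
      · intro j hj
        rcases eq_or_lt_of_le hj with rfl | hj'
        · exact subset_rfl
        · have hjp : j ≤ p := Order.lt_succ_iff.mp hj'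
          rw [hstep]
          exact fun x hx => hmono j hjp hx.1.1
    · have hEi : E i = ⋂ j, ⋂ _ : j < i, E j := Elim i hlim
      constructor
      · rw [hEi]
        refine club_iInter h0 hlim.pos.ne' ?_ E
          (fun j hj => (IH j hj (le_trans hj.le hiν)).1)
          (fun a b hab hb => (IH b hb (le_trans hb.le hiν)).2 a hab)
        rw [hcofk]
        exact lt_of_le_of_lt (Ordinal.card_le_card hiν) (by rw [hνcard]; exact hsθκ)
      · intro j hj
        rcases eq_or_lt_of_le hj with rfl | hj'
        · exact subset_rfl
        · rw [hEi]
          exact fun x hx => Set.mem_iInter₂.mp hx j hj'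
  have hclubν : IsClubIn (E ν) k := (Eprop ν le_rfl).1
  obtain ⟨α, hαS, hαacc⟩ := hSstat (accIn (E ν) k) (club_accIn h0 hclubν)
  have hα2 : α.cof = θ := (hS hαS).2
  have hαlim : Order.IsSuccLimit α := hSlim α hαS
  have hαk : α < k := (hS hαS).1
  have hαaccj : ∀ j, j ≤ ν → α ∈ accIn (E j) k :=
    fun j hj => accIn_mono ((Eprop ν le_rfl).2 j hj) hαacc
  -- stabilization of projections
  have stab : ∀ γ : Ordinal, ∃ i, i < ν ∧ ∀ j, i ≤ j → j < ν →
      sSup (E j ∩ Set.Iio γ) = sSup (E i ∩ Set.Iio γ) := by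
    intro γ
    obtain ⟨m, ⟨i, hiν, him⟩, hmin⟩ := Ordinal.lt_wf.has_min
      {v | ∃ i, i < ν ∧ sSup (E i ∩ Set.Iio γ) = v} ⟨_, 0, hνlim.pos, rfl⟩
    refine ⟨i, hiν, ?_⟩
    intro j hij hjν
    have hle : sSup (E j ∩ Set.Iio γ) ≤ sSup (E i ∩ Set.Iio γ) := by
      rcases (E j ∩ Set.Iio γ).eq_empty_or_nonempty with he | hne
      · rw [he]
        simp [csSup_empty, Ordinal.bot_eq_zero, zero_le]
      · exact csSup_le_csSup ⟨γ, fun w hw => hw.2.le⟩ hne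
          (fun x hx => ⟨(Eprop j hjν.le).2 i hij hx.1, hx.2⟩)
    have hnl : ¬ sSup (E j ∩ Set.Iio γ) < m := hmin _ ⟨j, hjν, rfl⟩
    rw [← him] at hnl
    exact le_antisymm hle (not_lt.1 hnl)
  choose idx hidx1 hidx2 using stab
  set i0 := Ordinal.bsup α.cof.ord (fun b _ => idx (fsF α b)) with hi0def
  have hi0ν : i0 < ν := by
    refine Ordinal.bsup_lt_ord ?_ (fun b _ => hidx1 _)
    rw [hνcof, Cardinal.card_ord, hα2]
    exact Order.lt_succ θ
  have hi1ν : Order.succ i0 < ν := hνlim.succ_lt hi0ν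
  have hclub0 : IsClubIn (E i0) k := (Eprop i0 hi0ν.le).1
  have hstep : E (Order.succ i0) = E i0 ∩ CC (E i0) hclub0 ∩ DD (E i0) hclub0 := by
    rw [Esucc i0]
    simp only [hΦ]
    rw [dif_pos hclub0]
  have hα1 : α ∈ E (Order.succ i0) :=
    accIn_subset (Eprop _ hi1ν.le).1 (hαaccj _ hi1ν.le)
  have hαD : α ∈ DD (E i0) hclub0 := by rw [hstep] at hα1; exact hα1.2
  refine hbad (E i0) hclub0 α hαS hαD ⟨1, ?_, ?_⟩
  · have h1 := hαlim.succ_lt hαlim.pos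
    rwa [Ordinal.succ_zero] at h1
  · intro x hx h1x
    have hPacc : PAcc (E i0) α := (hαaccj i0 hi0ν.le).2.2
    rw [ScOf, if_pos hPacc] at hx
    obtain ⟨γ, hγb, rfl⟩ := hx
    change 1 ≤ sSup (E i0 ∩ Set.Iio γ) at h1x
    show sSup (E i0 ∩ Set.Iio γ) ∈ CC (E i0) hclub0
    set W := E (Order.succ i0) ∩ Set.Iio γ with hWdef
    have hidxγ : idx γ ≤ i0 := by
      obtain ⟨b, hb, rfl⟩ := hγb
      exact Ordinal.le_bsup (fun b _ => idx (fsF α b)) b hb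
    have heq : sSup W = sSup (E i0 ∩ Set.Iio γ) := by
      rw [hidx2 γ (Order.succ i0) (hidxγ.trans (Order.le_succ i0)) hi1ν,
        hidx2 γ i0 hidxγ hi0ν]
    have hne : W.Nonempty := by
      by_contra hempty
      rw [Set.not_nonempty_iff_eq_empty] at hempty
      have h1 : (1 : Ordinal) ≤ sSup W := by rw [heq]; exact h1x
      rw [hempty] at h1
      simp [csSup_empty, Ordinal.bot_eq_zero] at h1
    have hmem : sSup W ∈ E (Order.succ i0) := by
      by_cases hin : sSup W ∈ W
      · exact hin.1
      · refine (Eprop _ hi1ν.le).1.2.2 _ ?_ ?_ ?_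
        · exact lt_of_le_of_lt (sSup_le_of_subset_Iio Set.inter_subset_right)
            (lt_trans (bset_lt hγb) hαk)
        · intro h
          rw [heq] at h
          rw [h] at h1x
          exact absurd h1x (not_le.2 zero_lt_one)
        · intro δ hδ
          obtain ⟨y, hy, hδy⟩ := exists_lt_of_lt_csSup hne hδ
          have hylt : y < sSup W := lt_of_le_of_ne
            (le_csSup ⟨γ, fun w hw => hw.2.le⟩ hy) (by rintro rfl; exact hin hy)
          exact ⟨y, hy.1, hδy, hylt⟩
    rw [hstep] at hmem
    rw [← heq]
    exact hmem.1.2
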